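/- arXiv:math/0206160 — 2 statements merged into one kernel-verified Lean document; each statement's English description precedes it below -/
import Mathlib

section
/- Assume the environment has finite range M and Kalikow's condition with constant ε > 0 holds in direction ℓ. Let U ⊂ Z^d be an M-connected set containing 0 with E_0(T_U) < ∞, where T_U is the exit time of U. Then E_0(X_{T_U}·ℓ) ≥ ε E_0(T_U). -/
open MeasureTheory Filter Set
open scoped ENNReal

noncomputable section

abbrev Zd (d : ℕ) := Fin d → ℤ
abbrev Env (d : ℕ) := Zd d → Zd d → ℝ
abbrev Traj (d : ℕ) := ℕ → Zd d

/-- shift of the environment by `k`: `(T^k ω) x e = ω (k+x) e`. -/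
def shiftE {d : ℕ} (k : Zd d) (ω : Env d) : Env d := fun x e => ω (k + x) e

/-- the sup-norm ball of radius `M` in `ℤ^d`, the set of admissible jumps. -/
def box (d M : ℕ) : Finset (Zd d) := Finset.Icc (fun _ => -(M : ℤ)) (fun _ => (M : ℤ))

/-- scalar product `x · ℓ`. -/
def dotl {d : ℕ} (x : Zd d) (ℓ : Fin d → ℝ) : ℝ := ∑ i, (x i : ℝ) * ℓ i

/-- the local drift in direction `ℓ`: `D(ω)·ℓ`. -/
def driftl {d : ℕ} (M : ℕ) (ℓ : Fin d → ℝ) (ω : Env d) : ℝ :=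
  ∑ e ∈ box d M, dotl e ℓ * ω 0 e

/-- `μ` is the law of the quenched walk in environment `ω` started at `x0`:
a probability measure with `X_0 = x0` a.s., and the Markov property with
transition probabilities `ω i (j - i)` from `i` to `j`. -/
def IsWalk {d : ℕ} (μ : Measure (Traj d)) (ω : Env d) (x0 : Zd d) : Prop :=
  IsProbabilityMeasure μ ∧ μ {w | w 0 = x0} = 1 ∧
  ∀ (n : ℕ) (A : Set (Traj d)), MeasurableSet A →
    (∀ w w' : Traj d, (∀ m ≤ n, w m = w' m) → (w ∈ A ↔ w' ∈ A)) →
    ∀ i j : Zd d,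
      μ (A ∩ {w | w n = i ∧ w (n + 1) = j}) =
        ENNReal.ofReal (ω i (j - i)) * μ (A ∩ {w | w n = i})

/-- a nice environment of range `M`: nonnegative transition probabilities of
total mass one, supported on jumps of sup-norm at most `M`. -/
def GoodEnv {d : ℕ} (M : ℕ) (ω : Env d) : Prop :=
  (∀ x e, 0 ≤ ω x e) ∧ (∀ x, ∑ e ∈ box d M, ω x e = 1) ∧
  (∀ x e, e ∉ box d M → ω x e = 0)

/-- `U` is `M`-connected: there is a path of range `M` through all its points. -/
def MConn {d : ℕ} (M : ℕ) (U : Finset (Zd d)) : Prop :=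
  ∃ (n : ℕ) (p : ℕ → Zd d), (∀ i ≤ n, p i ∈ U) ∧
    (∀ i < n, p (i + 1) - p i ∈ box d M) ∧ (∀ x ∈ U, ∃ i ≤ n, p i = x)

/-- `E^ω_{x0}[Σ_{j=0}^{T_U} 1(X_j = x)]`, the expected number of visits to `x`
before exiting `U`. -/
def exitGreen {d : ℕ} (μ : Measure (Traj d)) (U : Set (Zd d)) (x : Zd d) : ℝ≥0∞ :=
  ∑' j : ℕ, μ {w | w j = x ∧ ∀ m < j, w m ∈ U}

/-- Kalikow's condition in direction `ℓ` with constant `ε`, for the annealed walk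
with environment distribution `IP` and quenched laws `P ω` (started at `0`). -/
def KalikowCond {d : ℕ} (IP : Measure (Env d)) (P : Env d → Measure (Traj d))
    (M : ℕ) (ℓ : Fin d → ℝ) (ε : ℝ) : Prop :=
  0 < ε ∧ ∀ U : Finset (Zd d), (0 : Zd d) ∈ U → MConn M U → ∀ x ∈ U,
    ε * ∫ ω, (exitGreen (P ω) (↑U) x).toReal ∂IP ≤
      ∫ ω, driftl M ℓ (shiftE x ω) * (exitGreen (P ω) (↑U) x).toReal ∂IP

/-- shift invariance of the environment measure. -/
def ShiftInv {d : ℕ} (IP : Measure (Env d)) : Prop :=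
  ∀ k : Zd d, Measure.map (shiftE k) IP = IP

/-- ergodicity of the environment measure under the shifts. -/
def ErgEnv {d : ℕ} (IP : Measure (Env d)) : Prop :=
  ShiftInv IP ∧ ∀ S : Set (Env d), MeasurableSet S →
    (∀ k : Zd d, shiftE k ⁻¹' S = S) → IP S = 0 ∨ IP S = 1

/-- invariance of a measure for the environment process viewed from the particle,
whose kernel is `π(ω, A) = Σ_{|e| ≤ M} π_{0e}(ω) 1_A(T^e ω)`. -/
def EnvInvariant {d : ℕ} (M : ℕ) (IPinf : Measure (Env d)) : Prop :=
  ∀ A : Set (Env d), MeasurableSet A →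
    ∫⁻ ω, ∑ e ∈ box d M, ENNReal.ofReal (ω 0 e) * A.indicator 1 (shiftE e ω) ∂IPinf
      = IPinf A

/-- weak ellipticity in direction `ℓ`: a.s. `π_{0j} > 0` for all unit vectors `j`
with `j·ℓ ≥ 0`. -/
def WeakElliptic {d : ℕ} (IP : Measure (Env d)) (ℓ : Fin d → ℝ) : Prop :=
  ∀ᵐ ω ∂IP, ∀ e : Zd d, (∑ i, (e i) * (e i)) = 1 → 0 ≤ dotl e ℓ → 0 < ω 0 e

/-- the half-space σ-field `S_k = σ(ω_x : x·ℓ ≥ k)`. -/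
def Sfield {d : ℕ} (ℓ : Fin d → ℝ) (k : ℝ) : MeasurableSpace (Env d) :=
  ⨆ x ∈ {x : Zd d | k ≤ dotl x ℓ}, MeasurableSpace.comap (fun ω : Env d => ω x) inferInstance

/-- the exit time `T_U = inf {j : X_j ∉ U}` of a trajectory from `U`. -/
def exitTime {d : ℕ} (U : Set (Zd d)) (w : Traj d) : ℕ := sInf {j | w j ∉ U}

/-- a (possibly infinite) set is `M`-connected if every point is joined to `0`
by a path of range `M` inside the set. -/
def MConnSet {d : ℕ} (M : ℕ) (U : Set (Zd d)) : Prop :=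
  ∀ x ∈ U, ∃ (n : ℕ) (p : ℕ → Zd d), p 0 = 0 ∧ p n = x ∧
    (∀ i ≤ n, p i ∈ U) ∧ ∀ i < n, p (i + 1) - p i ∈ box d M

section part1
variable {d : ℕ}

lemma measSet_zd (S : Set (Zd d)) : MeasurableSet S := S.to_countable.measurableSet

lemma measSet_coord (j : ℕ) (S : Set (Zd d)) : MeasurableSet {w : Traj d | w j ∈ S} :=
  (measurable_pi_apply j) (measSet_zd S)

lemma measSet_eq (j : ℕ) (z : Zd d) : MeasurableSet {w : Traj d | w j = z} := by
  have := measSet_coord j ({z} : Set (Zd d)); simpa using this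

lemma mem_box_iff {M : ℕ} {e : Zd d} :
    e ∈ box d M ↔ ∀ i, -(M:ℤ) ≤ e i ∧ e i ≤ (M:ℤ) := by
  simp only [box, Finset.mem_Icc]
  constructor
  · rintro ⟨h1, h2⟩ i; exact ⟨h1 i, h2 i⟩
  · intro h; exact ⟨fun i => (h i).1, fun i => (h i).2⟩

lemma box_neg {M : ℕ} {e : Zd d} (he : e ∈ box d M) : -e ∈ box d M := by
  rw [mem_box_iff] at he ⊢
  intro i
  obtain ⟨h1, h2⟩ := he i
  simp only [Pi.neg_apply]
  omega

lemma dotl_sub (a b : Zd d) (ℓ : Fin d → ℝ) : dotl (a - b) ℓ = dotl a ℓ - dotl b ℓ := by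
  simp [dotl, sub_mul, Finset.sum_sub_distrib]

lemma dotl_zero (ℓ : Fin d → ℝ) : dotl (0 : Zd d) ℓ = 0 := by simp [dotl]

lemma dotl_bound {M : ℕ} {e : Zd d} (he : e ∈ box d M) (ℓ : Fin d → ℝ) :
    |dotl e ℓ| ≤ (M : ℝ) * ∑ i, |ℓ i| := by
  simp only [box, Finset.mem_Icc] at he
  calc |dotl e ℓ| ≤ ∑ i, |(e i : ℝ) * ℓ i| := Finset.abs_sum_le_sum_abs _ _
    _ ≤ ∑ i, (M : ℝ) * |ℓ i| := by
        refine Finset.sum_le_sum fun i _ => ?_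
        rw [abs_mul]
        refine mul_le_mul_of_nonneg_right ?_ (abs_nonneg _)
        have h1 := he.1 i
        have h2 := he.2 i
        rw [abs_le]
        constructor <;> [exact_mod_cast h1; exact_mod_cast h2]
    _ = (M : ℝ) * ∑ i, |ℓ i| := by rw [Finset.mul_sum]

end part1

section part2
variable {d : ℕ}

/-- the event that the walk stays in `U` up to time `n`. -/
def cylA {d : ℕ} (U : Set (Zd d)) (n : ℕ) : Set (Traj d) := {w | ∀ m ≤ n, w m ∈ U}

lemma measSet_cylA (U : Set (Zd d)) (n : ℕ) : MeasurableSet (cylA U n) := by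
  have : cylA U n = ⋂ m ∈ Finset.range (n+1), {w : Traj d | w m ∈ U} := by
    ext w; simp [cylA, Nat.lt_succ_iff]
  rw [this]
  exact MeasurableSet.biInter (Set.to_countable _) fun m _ => measSet_coord m U

lemma cylA_coord (U : Set (Zd d)) (n : ℕ) (w w' : Traj d)
    (h : ∀ m ≤ n, w m = w' m) : w ∈ cylA U n ↔ w' ∈ cylA U n := by
  constructor <;> intro hw m hm
  · rw [← h m hm]; exact hw m hm
  · rw [h m hm]; exact hw m hm

/-- the event: stay in `U` up to time `n`, `w n = z`, `w (n+1) = z + e`. -/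
def cylD {d : ℕ} (U : Set (Zd d)) (n : ℕ) (z e : Zd d) : Set (Traj d) :=
  cylA U n ∩ {w | w n = z ∧ w (n + 1) = z + e}

lemma measSet_cylD (U : Set (Zd d)) (n : ℕ) (z e : Zd d) : MeasurableSet (cylD U n z e) :=
  (measSet_cylA U n).inter ((measSet_coord n {z}).inter (measSet_coord (n+1) {z+e}))

open Classical in
/-- measurable version of `ω ↦ P^ω(cylA U n ∩ {w n = z})`. -/
def gfun (M : ℕ) (U : Set (Zd d)) : ℕ → Zd d → Env d → ℝ≥0∞
  | 0, z, _ => if z = 0 then 1 else 0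
  | n+1, z, ω =>
      if z ∈ U then ∑ e ∈ box d M, ENNReal.ofReal (ω (z - e) e) * gfun M U n (z - e) ω
      else 0

lemma gfun_meas (M : ℕ) (U : Set (Zd d)) (n : ℕ) (z : Zd d) :
    Measurable fun ω : Env d => gfun M U n z ω := by
  induction n generalizing z with
  | zero => simp only [gfun]; exact measurable_const
  | succ n ih =>
      simp only [gfun]
      split
      · exact Finset.measurable_sum _ fun e _ =>
          ((ENNReal.measurable_ofReal.comp
            ((measurable_pi_apply e).comp (measurable_pi_apply (z - e)))).mul (ih (z - e)))
      · exact measurable_const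

lemma gfun_notmem {M : ℕ} {U : Set (Zd d)} (h0 : (0:Zd d) ∈ U) {z : Zd d} (hz : z ∉ U)
    (n : ℕ) (ω : Env d) : gfun M U n z ω = 0 := by
  cases n with
  | zero =>
      simp only [gfun]
      rw [if_neg]; rintro rfl; exact hz h0
  | succ n => simp only [gfun]; rw [if_neg hz]

/-- the central identity: for a good walk, the quenched probability of
staying in `U` and being at `z` at time `n` equals `gfun`. -/
lemma walk_gfun {M : ℕ} {U : Set (Zd d)} (h0 : (0:Zd d) ∈ U)
    {μ : Measure (Traj d)} {ω : Env d} (hw : IsWalk μ ω 0) (hg : GoodEnv M ω) :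
    ∀ n z, μ (cylA U n ∩ {w | w n = z}) = gfun M U n z ω := by
  obtain ⟨hprob, h00, hmarkov⟩ := hw
  intro n
  induction n with
  | zero =>
      intro z
      by_cases hz : z = 0
      · subst hz
        have : cylA U 0 ∩ {w : Traj d | w 0 = 0} = {w : Traj d | w 0 = 0} := by
          ext w
          simp only [cylA, Set.mem_inter_iff, Set.mem_setOf_eq, Nat.le_zero]
          constructor
          · rintro ⟨_, h⟩; exact h
          · rintro h; exact ⟨fun m hm => by rw [hm, h]; exact h0, h⟩
        rw [this, h00, gfun, if_pos rfl]
      · have hsub : cylA U 0 ∩ {w : Traj d | w 0 = z} ⊆ {w : Traj d | w 0 = 0}ᶜ := by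
          intro w hw'
          simp only [Set.mem_compl_iff, Set.mem_setOf_eq]
          intro h00'
          exact hz (by rw [← hw'.2, h00'])
        have hc : μ ({w : Traj d | w 0 = 0}ᶜ) = 0 := by
          haveI := hprob
          have hm : MeasurableSet {w : Traj d | w 0 = 0} := by
            have := measSet_coord 0 ({0} : Set (Zd d))
            simpa using this
          rw [measure_compl hm (measure_ne_top μ _), h00]
          simp
        have := le_trans (measure_mono hsub) (le_of_eq hc)
        rw [gfun, if_neg hz]
        exact le_antisymm this (zero_le)
  | succ n ih =>
      intro z'
      by_cases hz' : z' ∈ U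
      · -- decompose over the previous position
        have hdecomp : cylA U (n+1) ∩ {w : Traj d | w (n+1) = z'} =
            ⋃ z : Zd d, cylA U n ∩ {w | w n = z ∧ w (n + 1) = z'} := by
          ext w
          simp only [Set.mem_iUnion, Set.mem_inter_iff, Set.mem_setOf_eq, cylA]
          constructor
          · rintro ⟨hA, hz⟩
            exact ⟨w n, fun m hm => hA m (le_trans hm (Nat.le_succ n)), rfl, hz⟩
          · rintro ⟨z, hA, rfl, hz⟩
            refine ⟨fun m hm => ?_, hz⟩
            rcases Nat.lt_succ_iff_lt_or_eq.mp (Nat.lt_succ_of_le hm) with h | h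
            · exact hA m (Nat.lt_succ_iff.mp h)
            · subst h; rw [hz]; exact hz'
        have hdisj : Pairwise (Function.onFun Disjoint fun z : Zd d =>
            cylA U n ∩ {w | w n = z ∧ w (n + 1) = z'}) := by
          intro a b hab
          refine Set.disjoint_left.mpr ?_
          rintro w ⟨_, rfl, _⟩ ⟨_, hb, _⟩
          exact hab hb
        have hmeasz : ∀ z : Zd d,
            MeasurableSet (cylA U n ∩ {w : Traj d | w n = z ∧ w (n + 1) = z'}) := by
          intro z
          exact (measSet_cylA U n).inter ((measSet_coord n {z}).inter (measSet_coord (n+1) {z'}))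
        rw [hdecomp, measure_iUnion hdisj hmeasz]
        have hterm : ∀ z : Zd d, μ (cylA U n ∩ {w | w n = z ∧ w (n + 1) = z'}) =
            ENNReal.ofReal (ω z (z' - z)) * gfun M U n z ω := by
          intro z
          rw [hmarkov n (cylA U n) (measSet_cylA U n) (cylA_coord U n) z z', ih z]
        simp only [hterm]
        have hsupp : ∀ z ∉ (box d M).image (fun e => z' - e),
            ENNReal.ofReal (ω z (z' - z)) * gfun M U n z ω = 0 := by
          intro z hzmem
          have hnb : z' - z ∉ box d M := by
            intro hb
            exact hzmem (Finset.mem_image.mpr ⟨z' - z, hb, by abel⟩)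
          rw [hg.2.2 z (z' - z) hnb]
          simp
        rw [tsum_eq_sum hsupp, Finset.sum_image (fun x _ y _ hxy => by
          have : z' - (z' - x) = z' - (z' - y) := by rw [hxy]
          simpa [sub_sub_cancel] using this)]
        have : ∀ e ∈ box d M,
            ENNReal.ofReal (ω (z' - e) (z' - (z' - e))) * gfun M U n (z' - e) ω =
            ENNReal.ofReal (ω (z' - e) e) * gfun M U n (z' - e) ω := by
          intro e _
          rw [sub_sub_cancel]
        rw [Finset.sum_congr rfl this]
        rw [gfun, if_pos hz']
      · have : cylA U (n+1) ∩ {w : Traj d | w (n+1) = z'} = ∅ := by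
          ext w
          simp only [Set.mem_inter_iff, Set.mem_setOf_eq, Set.mem_empty_iff_false, iff_false,
            cylA]
          rintro ⟨hA, hz⟩
          exact hz' (hz ▸ hA (n+1) le_rfl)
        rw [this, measure_empty, gfun, if_neg hz']

end part2

section part3
variable {d M : ℕ} {U : Set (Zd d)} {μ : Measure (Traj d)} {ω : Env d}

lemma gfun_le_one (h0 : (0:Zd d) ∈ U) (hw : IsWalk μ ω 0) (hg : GoodEnv M ω)
    (n : ℕ) (z : Zd d) : gfun M U n z ω ≤ 1 := by
  haveI := hw.1
  rw [← walk_gfun h0 hw hg n z]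
  exact prob_le_one

lemma walk_null0 (hw : IsWalk μ ω 0) : μ {w : Traj d | w 0 ≠ 0} = 0 := by
  haveI := hw.1
  have hm : MeasurableSet {w : Traj d | w 0 = 0} := by
    have := measSet_coord 0 ({0} : Set (Zd d)); simpa using this
  have : {w : Traj d | w 0 ≠ 0} = {w : Traj d | w 0 = 0}ᶜ := rfl
  rw [this, measure_compl hm (measure_ne_top μ _), hw.2.1]
  simp

lemma walk_cylD (h0 : (0:Zd d) ∈ U) (hw : IsWalk μ ω 0) (hg : GoodEnv M ω)
    (n : ℕ) (z e : Zd d) :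
    μ (cylD U n z e) = ENNReal.ofReal (ω z e) * gfun M U n z ω := by
  have := hw.2.2 n (cylA U n) (measSet_cylA U n) (cylA_coord U n) z (z + e)
  rw [cylD, this, add_sub_cancel_left, walk_gfun h0 hw hg n z]

lemma walk_step (hw : IsWalk μ ω 0) (n : ℕ) (z y : Zd d) :
    μ {w : Traj d | w n = z ∧ w (n+1) = y} =
      ENNReal.ofReal (ω z (y - z)) * μ {w : Traj d | w n = z} := by
  have := hw.2.2 n Set.univ MeasurableSet.univ (fun _ _ _ => Iff.rfl) z y
  simpa using this

lemma walk_notbox (hw : IsWalk μ ω 0) (hg : GoodEnv M ω) (n : ℕ) :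
    μ {w : Traj d | w (n+1) - w n ∉ box d M} = 0 := by
  have hsub : {w : Traj d | w (n+1) - w n ∉ box d M} ⊆
      ⋃ p : Zd d × Zd d,
        if p.2 - p.1 ∉ box d M then {w : Traj d | w n = p.1 ∧ w (n+1) = p.2} else ∅ := by
    intro w hw'
    refine Set.mem_iUnion.mpr ⟨(w n, w (n+1)), ?_⟩
    have hc : ((w n, w (n+1)).2 - (w n, w (n+1)).1 ∉ box d M) := hw'
    rw [if_pos hc]
    exact ⟨rfl, rfl⟩
  refine le_antisymm (le_trans (measure_mono hsub) (le_of_eq ?_)) (zero_le)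
  refine measure_iUnion_null fun p => ?_
  by_cases hp : p.2 - p.1 ∉ box d M
  · rw [if_pos hp, walk_step hw n p.1 p.2, hg.2.2 p.1 (p.2 - p.1) hp]
    simp
  · rw [if_neg hp]; simp

/-- measurable version of the Green function `exitGreen`. -/
def gG (M : ℕ) (U : Set (Zd d)) (z : Zd d) (ω : Env d) : ℝ≥0∞ := ∑' n, gfun M U n z ω

lemma gG_meas (M : ℕ) (U : Set (Zd d)) (z : Zd d) : Measurable (gG M U z) :=
  Measurable.ennreal_tsum fun n => gfun_meas M U n z

lemma greenEvent_eq (n : ℕ) {z : Zd d} (hzU : z ∈ U) :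
    {w : Traj d | w n = z ∧ ∀ m < n, w m ∈ U} = cylA U n ∩ {w : Traj d | w n = z} := by
  ext w
  simp only [Set.mem_setOf_eq, Set.mem_inter_iff, cylA]
  constructor
  · rintro ⟨hz', hm⟩
    refine ⟨fun m hm' => ?_, hz'⟩
    rcases lt_or_eq_of_le hm' with h | h
    · exact hm m h
    · rw [h, hz']; exact hzU
  · rintro ⟨hA, hz'⟩
    exact ⟨hz', fun m hm' => hA m (le_of_lt hm')⟩

lemma exitGreen_eq_gG (h0 : (0:Zd d) ∈ U) (hw : IsWalk μ ω 0) (hg : GoodEnv M ω)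
    {z : Zd d} (hzU : z ∈ U) : exitGreen μ U z = gG M U z ω := by
  unfold exitGreen gG
  refine tsum_congr fun n => ?_
  rw [greenEvent_eq n hzU, walk_gfun h0 hw hg n z]

end part3

section part4
variable {d : ℕ}

open Classical in
/-- finite approximations of `U`: points reachable in `≤ k` box-steps within `U`. -/
def Vk (M : ℕ) (U : Set (Zd d)) : ℕ → Finset (Zd d)
  | 0 => {0}
  | k+1 => Vk M U k ∪ (Vk M U k).biUnion fun x =>
      ((box d M).image fun e => x + e).filter (· ∈ U)

variable {M : ℕ} {U : Set (Zd d)}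

lemma Vk_zero_mem (k : ℕ) : (0:Zd d) ∈ Vk M U k := by
  induction k with
  | zero => simp [Vk]
  | succ k ih => simp only [Vk]; exact Finset.mem_union_left _ ih

lemma Vk_succ_mem {k : ℕ} {x e : Zd d} (hx : x ∈ Vk M U k) (he : e ∈ box d M)
    (hU : x + e ∈ U) : x + e ∈ Vk M U (k+1) := by
  classical
  simp only [Vk]
  refine Finset.mem_union_right _ (Finset.mem_biUnion.mpr ⟨x, hx, ?_⟩)
  rw [Finset.mem_filter]
  exact ⟨Finset.mem_image.mpr ⟨e, he, rfl⟩, hU⟩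

lemma Vk_mono_succ (k : ℕ) : Vk M U k ⊆ Vk M U (k+1) := by
  simp only [Vk]; exact Finset.subset_union_left

lemma Vk_mono {k l : ℕ} (h : k ≤ l) : Vk M U k ⊆ Vk M U l := by
  induction l with
  | zero => rw [Nat.le_zero.mp h]
  | succ l ih =>
      rcases Nat.lt_succ_iff_lt_or_eq.mp (Nat.lt_succ_of_le h) with h' | h'
      · exact (ih (Nat.lt_succ_iff.mp h')).trans (Vk_mono_succ l)
      · rw [h']

lemma Vk_sub (h0 : (0:Zd d) ∈ U) (k : ℕ) : ↑(Vk M U k) ⊆ U := by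
  induction k with
  | zero => intro x hx; simp only [Vk, Finset.coe_singleton, Set.mem_singleton_iff] at hx
            rw [hx]; exact h0
  | succ k ih =>
      intro x hx
      simp only [Vk, Finset.coe_union, Set.mem_union] at hx
      rcases hx with hx | hx
      · exact ih hx
      · classical
        simp only [Finset.coe_biUnion, Set.mem_iUnion, Finset.mem_coe, Finset.mem_filter]
          at hx
        obtain ⟨y, _, _, hxU⟩ := hx
        exact hxU

lemma Vk_reach (k : ℕ) : ∀ x ∈ Vk M U k, ∃ (n : ℕ) (p : ℕ → Zd d),
    p 0 = 0 ∧ p n = x ∧ (∀ i ≤ n, p i ∈ Vk M U k) ∧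
    ∀ i < n, p (i + 1) - p i ∈ box d M := by
  induction k with
  | zero =>
      intro x hx
      simp only [Vk, Finset.mem_singleton] at hx
      subst hx
      exact ⟨0, fun _ => 0, rfl, rfl, fun i _ => by simp [Vk], fun i h => absurd h (Nat.not_lt_zero i)⟩
  | succ k ih =>
      intro x hx
      classical
      simp only [Vk, Finset.mem_union, Finset.mem_biUnion, Finset.mem_filter,
        Finset.mem_image] at hx
      rcases hx with hx | ⟨y, hy, ⟨e, he, rfl⟩, _⟩
      · obtain ⟨n, p, h1, h2, h3, h4⟩ := ih x hx
        exact ⟨n, p, h1, h2, fun i hi => Vk_mono_succ k (h3 i hi), h4⟩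
      · obtain ⟨n, p, h1, h2, h3, h4⟩ := ih y hy
        refine ⟨n+1, fun i => if i ≤ n then p i else y + e, by simp [h1], by simp, ?_, ?_⟩
        · intro i hi
          dsimp only
          by_cases hin : i ≤ n
          · rw [if_pos hin]; exact Vk_mono_succ k (h3 i hin)
          · rw [if_neg hin]
            exact Vk_succ_mem hy he (by
              have := Finset.mem_filter.mp (by
                exact Finset.mem_filter.mpr ⟨Finset.mem_image.mpr ⟨e, he, rfl⟩, by assumption⟩)
              exact this.2)
        · intro i hi
          dsimp only
          by_cases hin : i < n
          · rw [if_pos (Nat.succ_le_of_lt hin), if_pos hin.le]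
            exact h4 i hin
          · have : i = n := by omega
            subst this
            rw [if_pos le_rfl, if_neg (by omega), h2]
            simpa using he

/-- every point of an `M`-connected set is in some `Vk`. -/
lemma Vk_cover (h0 : (0:Zd d) ∈ U) (hconn : MConnSet M U) :
    ∀ x ∈ U, ∃ k, x ∈ Vk M U k := by
  intro x hx
  obtain ⟨n, p, h1, h2, h3, h4⟩ := hconn x hx
  suffices h : ∀ i ≤ n, p i ∈ Vk M U i by
    exact ⟨n, h2 ▸ h n le_rfl⟩
  intro i
  induction i with
  | zero => intro _; rw [h1]; exact Vk_zero_mem 0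
  | succ i ih =>
      intro hi
      have hpi := ih (by omega)
      have : p (i+1) = p i + (p (i+1) - p i) := by abel
      rw [this]
      exact Vk_succ_mem hpi (h4 i (by omega)) (by rw [← this]; exact h3 (i+1) hi)

/-- a finite set in which every point is reachable from `0` is `M`-connected. -/
lemma traversal {M : ℕ} {W : Finset (Zd d)} (h0 : (0:Zd d) ∈ W)
    (hreach : ∀ x ∈ W, ∃ (n : ℕ) (p : ℕ → Zd d), p 0 = 0 ∧ p n = x ∧
      (∀ i ≤ n, p i ∈ W) ∧ ∀ i < n, p (i + 1) - p i ∈ box d M) :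
    MConn M W := by
  classical
  suffices h : ∀ F : Finset (Zd d), F ⊆ W → ∃ (n : ℕ) (p : ℕ → Zd d),
      p 0 = 0 ∧ p n = 0 ∧ (∀ i ≤ n, p i ∈ W) ∧ (∀ i < n, p (i + 1) - p i ∈ box d M) ∧
      ∀ x ∈ F, ∃ i ≤ n, p i = x by
    obtain ⟨n, p, _, _, h1, h2, h3⟩ := h W (Finset.Subset.refl W)
    exact ⟨n, p, h1, h2, h3⟩
  intro F
  induction F using Finset.induction_on with
  | empty =>
      intro _
      exact ⟨0, fun _ => 0, rfl, rfl, fun i _ => h0, fun i h => absurd h (Nat.not_lt_zero i),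
        fun x hx => absurd hx (Finset.notMem_empty x)⟩
  | @insert a F haF ih =>
      intro hsub
      obtain ⟨m, q, hq0, hqm, hqW, hqstep, hqcov⟩ := ih (Finset.Subset.trans (Finset.subset_insert a F) hsub)
      obtain ⟨t, r, hr0, hrt, hrW, hrstep⟩ := hreach a (hsub (Finset.mem_insert_self a F))
      by_cases ht : t = 0
      · refine ⟨m, q, hq0, hqm, hqW, hqstep, fun x hx => ?_⟩
        rcases Finset.mem_insert.mp hx with rfl | hx
        · exact ⟨0, Nat.zero_le m, by rw [hq0, ← hr0, ← hrt, ht]⟩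
        · exact hqcov x hx
      · -- append the out-and-back excursion to `a`
        refine ⟨m + 2*t, fun i => if i ≤ m then q i else if i ≤ m + t then r (i - m)
          else r (m + 2*t - i), by dsimp only; rw [if_pos (Nat.zero_le m)]; exact hq0,
          by dsimp only
             rw [if_neg (by omega), if_neg (by omega), Nat.sub_self]
             exact hr0, ?_, ?_, ?_⟩
        · intro i hi
          dsimp only
          by_cases h1 : i ≤ m
          · rw [if_pos h1]; exact hqW i h1
          · rw [if_neg h1]
            by_cases h2 : i ≤ m + t
            · rw [if_pos h2]; exact hrW (i - m) (by omega)
            · rw [if_neg h2]; exact hrW (m + 2*t - i) (by omega)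
        · intro i hi
          dsimp only
          rcases Nat.lt_or_ge i m with h1 | h1
          · rw [if_pos (by omega : i + 1 ≤ m), if_pos (by omega : i ≤ m)]
            exact hqstep i h1
          rcases Nat.eq_or_lt_of_le h1 with h2 | h2
          · rw [← h2]
            rw [if_neg (by omega : ¬ (m + 1 ≤ m)), if_pos (by omega : m + 1 ≤ m + t),
              if_pos (le_refl m)]
            have e1 : m + 1 - m = 1 := by omega
            rw [e1, hqm, ← hr0]
            exact hrstep 0 (by omega)
          · rw [if_neg (by omega : ¬ (i ≤ m)), if_neg (by omega : ¬ (i + 1 ≤ m))]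
            by_cases h3 : i + 1 ≤ m + t
            · rw [if_pos h3, if_pos (by omega)]
              have e1 : i + 1 - m = (i - m) + 1 := by omega
              rw [e1]
              exact hrstep (i - m) (by omega)
            by_cases h4 : i ≤ m + t
            · rw [if_neg h3, if_pos h4]
              have e2 : m + 2*t - (i+1) = t - 1 := by omega
              have e3 : i - m = t := by omega
              rw [e2, e3]
              have hb := box_neg (hrstep (t-1) (by omega))
              have e4 : t - 1 + 1 = t := by omega
              rw [e4] at hb
              simpa using hb
            · rw [if_neg h3, if_neg h4]
              have e2 : m + 2*t - i = (m + 2*t - (i+1)) + 1 := by omega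
              rw [e2]
              have hb := box_neg (hrstep (m + 2*t - (i+1)) (by omega))
              simpa using hb
        · intro x hx
          rcases Finset.mem_insert.mp hx with rfl | hx
          · refine ⟨m + t, by omega, ?_⟩
            dsimp only
            rw [if_neg (by omega), if_pos le_rfl]
            have : m + t - m = t := by omega
            rw [this, hrt]
          · obtain ⟨i, hi, hpi⟩ := hqcov x hx
            exact ⟨i, by omega, by dsimp only; rw [if_pos hi]; exact hpi⟩

end part4

lemma Vk_MConn {d M : ℕ} {U : Set (Zd d)} (k : ℕ) : MConn M (Vk M U k) :=
  traversal (Vk_zero_mem k) (Vk_reach k)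

section part5
variable {d M : ℕ} {IP : Measure (Env d)}
  {P : Env d → Measure (Traj d)} {ann : Measure (Traj d)} {U : Set (Zd d)}
  (hP : ∀ᵐ ω ∂IP, IsWalk (P ω) ω 0)
  (hgood : ∀ᵐ ω ∂IP, GoodEnv M ω)
  (hann : ∀ S : Set (Traj d), MeasurableSet S → ann S = ∫⁻ ω, P ω S ∂IP)

include hP hann in
lemma ann_univ [IsProbabilityMeasure IP] : ann Set.univ = 1 := by
  rw [hann _ MeasurableSet.univ]
  rw [lintegral_congr_ae (g := fun _ => 1) (by
    filter_upwards [hP] with ω hw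
    haveI := hw.1
    simp)]
  simp

include hP hgood hann in
lemma ann_gfun (h0 : (0:Zd d) ∈ U) (n : ℕ) (z : Zd d) :
    ann (cylA U n ∩ {w | w n = z}) = ∫⁻ ω, gfun M U n z ω ∂IP := by
  rw [hann _ ((measSet_cylA U n).inter (measSet_eq n z))]
  refine lintegral_congr_ae ?_
  filter_upwards [hP, hgood] with ω hw hg
  exact walk_gfun h0 hw hg n z

include hP hgood hann in
lemma ann_cylD (h0 : (0:Zd d) ∈ U) (n : ℕ) (z e : Zd d) :
    ann (cylD U n z e) = ∫⁻ ω, ENNReal.ofReal (ω z e) * gfun M U n z ω ∂IP := by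
  rw [hann _ (measSet_cylD U n z e)]
  refine lintegral_congr_ae ?_
  filter_upwards [hP, hgood] with ω hw hg
  exact walk_cylD h0 hw hg n z e

include hP hgood hann in
lemma ann_cylD_notbox (h0 : (0:Zd d) ∈ U) (n : ℕ) (z e : Zd d) (he : e ∉ box d M) :
    ann (cylD U n z e) = 0 := by
  rw [ann_cylD hP hgood hann h0 n z e]
  rw [lintegral_congr_ae (g := fun _ => 0) (by
    filter_upwards [hgood] with ω hg
    rw [hg.2.2 z e he]
    simp)]
  simp

include hP hann in
lemma ann_null0 : ann {w : Traj d | w 0 ≠ 0} = 0 := by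
  have hm : MeasurableSet {w : Traj d | w 0 ≠ 0} := (measSet_eq 0 0).compl
  rw [hann _ hm]
  rw [lintegral_congr_ae (g := fun _ => 0) (by
    filter_upwards [hP] with ω hw
    exact walk_null0 hw)]
  simp

include hP hgood hann in
lemma ann_notbox (n : ℕ) : ann {w : Traj d | w (n+1) - w n ∉ box d M} = 0 := by
  have hm : MeasurableSet {w : Traj d | w (n+1) - w n ∉ box d M} := by
    have h : {w : Traj d | w (n+1) - w n ∉ box d M} =
        ⋃ p ∈ {p : Zd d × Zd d | p.2 - p.1 ∉ box d M},
          ({w : Traj d | w n = p.1} ∩ {w : Traj d | w (n+1) = p.2}) := by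
      ext w
      simp only [Set.mem_setOf_eq, Set.mem_iUnion, Set.mem_inter_iff]
      constructor
      · intro hw; exact ⟨(w n, w (n+1)), hw, rfl, rfl⟩
      · rintro ⟨p, hp, h1, h2⟩; rw [← h1, ← h2] at hp; exact hp
    rw [h]
    exact MeasurableSet.biUnion (Set.to_countable _) fun p _ =>
      (measSet_eq n p.1).inter (measSet_eq (n+1) p.2)
  rw [hann _ hm]
  rw [lintegral_congr_ae (g := fun _ => 0) (by
    filter_upwards [hP, hgood] with ω hw hg
    exact walk_notbox hw hg n)]
  simp

lemma ann_neverexit (hfin : (∑' n : ℕ, ann (cylA U n)) ≠ ⊤) :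
    ann (⋂ n, cylA U n) = 0 := by
  have hle : ∀ n, ann (⋂ m, cylA U m) ≤ ann (cylA U n) :=
    fun n => measure_mono (Set.iInter_subset _ n)
  have htend := ENNReal.tendsto_atTop_zero_of_tsum_ne_top hfin
  exact le_antisymm (ge_of_tendsto htend (Filter.Eventually.of_forall hle)) (zero_le)

include hP hgood hann in
lemma ann_sum_z (h0 : (0:Zd d) ∈ U) (n : ℕ) :
    ∑' z : Zd d, ann (cylA U n ∩ {w | w n = z}) = ann (cylA U n) := by
  rw [← measure_iUnion (fun a b hab => Set.disjoint_left.mpr (by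
      rintro w ⟨_, rfl⟩ ⟨_, hb⟩
      exact hab hb))
    (fun z => (measSet_cylA U n).inter (measSet_eq n z))]
  congr 1
  ext w
  simp only [Set.mem_iUnion, Set.mem_inter_iff, Set.mem_setOf_eq]
  constructor
  · rintro ⟨z, h, _⟩; exact h
  · intro h; exact ⟨w n, h, rfl⟩

lemma ann_sum_D (n : ℕ) :
    ∑' p : Zd d × Zd d, ann (cylD U n p.1 p.2) ≤ ann (cylA U n) := by
  have hdisj : Pairwise (Function.onFun Disjoint fun p : Zd d × Zd d => cylD U n p.1 p.2) := by
    intro a b hab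
    refine Set.disjoint_left.mpr ?_
    rintro w ⟨_, ha1, ha2⟩ ⟨_, hb1, hb2⟩
    apply hab
    have h1 : a.1 = b.1 := by rw [← ha1, ← hb1]
    have h2 : a.1 + a.2 = b.1 + b.2 := by rw [← ha2, ← hb2]
    rw [h1] at h2
    exact Prod.ext h1 (add_right_injective _ h2)
  rw [← measure_iUnion hdisj (fun p => measSet_cylD U n p.1 p.2)]
  exact measure_mono (Set.iUnion_subset fun p => Set.inter_subset_left)

end part5

section part6
variable {d M : ℕ} {U : Set (Zd d)}

lemma lt_exitTime_iff {w : Traj d} (hne : {j | w j ∉ U}.Nonempty) {n : ℕ} :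
    n < exitTime U w ↔ ∀ m ≤ n, w m ∈ U := by
  constructor
  · intro h m hm
    by_contra hmem
    have h2 : exitTime U w ≤ m := Nat.sInf_le hmem
    omega
  · intro h
    rcases Nat.lt_or_ge n (exitTime U w) with h' | h'
    · exact h'
    · exact absurd (h _ h') (Nat.sInf_mem hne)

lemma measSet_exitTime_eq (U : Set (Zd d)) (n : ℕ) :
    MeasurableSet {w : Traj d | exitTime U w = n} := by
  have h : {w : Traj d | exitTime U w = n} =
      (({w : Traj d | w n ∉ U} ∩ {w | ∀ m < n, w m ∈ U}) ∪
        (if n = 0 then {w : Traj d | ∀ j, w j ∈ U} else ∅)) := by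
    ext w
    simp only [Set.mem_setOf_eq, Set.mem_union, Set.mem_inter_iff]
    constructor
    · intro h
      by_cases hne : {j | w j ∉ U}.Nonempty
      · left
        have hmem := Nat.sInf_mem hne
        rw [exitTime] at h
        refine ⟨h ▸ hmem, fun m hm => ?_⟩
        by_contra hc
        have := Nat.sInf_le (s := {j | w j ∉ U}) hc
        omega
      · right
        have hempty : {j | w j ∉ U} = ∅ := Set.not_nonempty_iff_eq_empty.mp hne
        have : exitTime U w = 0 := by rw [exitTime, hempty, Nat.sInf_empty]
        rw [if_pos (by omega)]
        intro j
        by_contra hc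
        exact absurd (Set.mem_setOf_eq ▸ hc) (by rw [Set.eq_empty_iff_forall_notMem] at hempty; exact hempty j)
    · intro h
      rcases h with ⟨h1, h2⟩ | h
      · refine le_antisymm (Nat.sInf_le h1) ?_
        by_contra hc
        push_neg at hc
        have hmem := Nat.sInf_mem (⟨n, h1⟩ : {j | w j ∉ U}.Nonempty)
        exact hmem (h2 _ hc)
      · by_cases hn : n = 0
        · rw [if_pos hn] at h
          have hempty : {j | w j ∉ U} = ∅ := by
            rw [Set.eq_empty_iff_forall_notMem]; intro j hj; exact hj (h j)
          rw [exitTime, hempty, Nat.sInf_empty, hn]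
        · rw [if_neg hn] at h; exact absurd h (Set.notMem_empty w)
  rw [h]
  refine MeasurableSet.union (MeasurableSet.inter ?_ ?_) ?_
  · exact (measSet_coord n U).compl
  · have : {w : Traj d | ∀ m < n, w m ∈ U} = ⋂ m ∈ Finset.range n, {w : Traj d | w m ∈ U} := by
      ext w; simp
    rw [this]
    exact MeasurableSet.biInter (Set.to_countable _) fun m _ => measSet_coord m U
  · by_cases hn : n = 0
    · rw [if_pos hn]
      have : {w : Traj d | ∀ j, w j ∈ U} = ⋂ j, {w : Traj d | w j ∈ U} := by ext w; simp
      rw [this]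
      exact MeasurableSet.iInter fun j => measSet_coord j U
    · rw [if_neg hn]; exact MeasurableSet.empty

lemma meas_exit_val (U : Set (Zd d)) : Measurable fun w : Traj d => w (exitTime U w) := by
  refine measurable_to_countable' fun y => ?_
  have h : (fun w : Traj d => w (exitTime U w)) ⁻¹' {y} =
      ⋃ n, ({w : Traj d | exitTime U w = n} ∩ {w : Traj d | w n = y}) := by
    ext w
    simp only [Set.mem_preimage, Set.mem_singleton_iff, Set.mem_iUnion, Set.mem_inter_iff,
      Set.mem_setOf_eq]
    constructor
    · intro h; exact ⟨exitTime U w, rfl, h⟩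
    · rintro ⟨n, h1, h2⟩; rw [h1]; exact h2
  rw [h]
  exact MeasurableSet.iUnion fun n => (measSet_exitTime_eq U n).inter (measSet_eq n y)

lemma tsum_indicator_eq (ℓ : Fin d → ℝ) {w : Traj d} (h0w : w 0 = 0)
    (hne : {j | w j ∉ U}.Nonempty) :
    ∑' i : Zd d × ℕ × Zd d,
      (cylD U i.2.1 i.1 i.2.2).indicator (fun _ => dotl i.2.2 ℓ) w
      = dotl (w (exitTime U w)) ℓ := by
  classical
  set T := exitTime U w with hT
  have hsupp : ∀ i : Zd d × ℕ × Zd d,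
      i ∉ (Finset.range T).image (fun n => (w n, n, w (n+1) - w n)) →
      (cylD U i.2.1 i.1 i.2.2).indicator (fun _ => dotl i.2.2 ℓ) w = 0 := by
    rintro ⟨z, n, e⟩ hi
    rw [Set.indicator_apply_eq_zero]
    intro hw
    exfalso
    apply hi
    have hw' : w ∈ cylA U n ∧ w n = z ∧ w (n+1) = z + e := hw
    obtain ⟨hA, h1, h2⟩ := hw'
    refine Finset.mem_image.mpr ⟨n, Finset.mem_range.mpr ((lt_exitTime_iff hne).mpr hA), ?_⟩
    have he : w (n+1) - w n = e := by rw [h2, h1]; abel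
    rw [he, h1]
  rw [tsum_eq_sum hsupp, Finset.sum_image (by
    rintro a _ b _ hab
    have := congrArg (fun i : Zd d × ℕ × Zd d => i.2.1) hab
    simpa using this)]
  have hterm : ∀ n ∈ Finset.range T,
      (cylD U n (w n) (w (n+1) - w n)).indicator (fun _ => dotl (w (n+1) - w n) ℓ) w
        = dotl (w (n+1)) ℓ - dotl (w n) ℓ := by
    intro n hn
    rw [Set.indicator_of_mem, dotl_sub]
    exact ⟨(lt_exitTime_iff hne).mp (Finset.mem_range.mp hn), rfl, by abel⟩

  rw [Finset.sum_congr rfl hterm, Finset.sum_range_sub (fun n => dotl (w n) ℓ) T,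
    h0w, dotl_zero, sub_zero]

end part6

section part7
variable {d M : ℕ} {U : Set (Zd d)}

lemma cylA_mono {V W : Set (Zd d)} (h : V ⊆ W) (n : ℕ) : cylA V n ⊆ cylA W n :=
  fun w hw m hm => h (hw m hm)

lemma driftl_shift (M : ℕ) (ℓ : Fin d → ℝ) (z : Zd d) (ω : Env d) :
    driftl M ℓ (shiftE z ω) = ∑ e ∈ box d M, dotl e ℓ * ω z e := by
  simp [driftl, shiftE]

lemma driftl_meas (M : ℕ) (ℓ : Fin d → ℝ) (z : Zd d) :
    Measurable fun ω : Env d => driftl M ℓ (shiftE z ω) := by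
  simp only [driftl_shift]
  exact Finset.measurable_sum _ fun e _ =>
    (measurable_const.mul ((measurable_pi_apply e).comp (measurable_pi_apply z)))

lemma driftl_abs_le {ω : Env d} (hg : GoodEnv M ω) (ℓ : Fin d → ℝ) (z : Zd d) :
    |driftl M ℓ (shiftE z ω)| ≤ (M:ℝ) * ∑ i, |ℓ i| := by
  rw [driftl_shift]
  calc |∑ e ∈ box d M, dotl e ℓ * ω z e| ≤ ∑ e ∈ box d M, |dotl e ℓ * ω z e| :=
        Finset.abs_sum_le_sum_abs _ _
    _ ≤ ∑ e ∈ box d M, ((M:ℝ) * ∑ i, |ℓ i|) * ω z e := by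
        refine Finset.sum_le_sum fun e he => ?_
        rw [abs_mul, abs_of_nonneg (hg.1 z e)]
        exact mul_le_mul_of_nonneg_right (dotl_bound he ℓ) (hg.1 z e)
    _ = ((M:ℝ) * ∑ i, |ℓ i|) * ∑ e ∈ box d M, ω z e := by rw [← Finset.mul_sum]
    _ = (M:ℝ) * ∑ i, |ℓ i| := by rw [hg.2.1 z]; ring

lemma gfun_tendsto (h0U : (0:Zd d) ∈ U) {μ : Measure (Traj d)} {ω : Env d}
    (hw : IsWalk μ ω 0) (hg : GoodEnv M ω) (k0 : ℕ) (z : Zd d) (n : ℕ) :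
    Monotone (fun k => gfun M (↑(Vk M U (k0+k)) : Set (Zd d)) n z ω) ∧
    Tendsto (fun k => gfun M (↑(Vk M U (k0+k)) : Set (Zd d)) n z ω) atTop
      (nhds (gfun M U n z ω)) := by
  have hrep : ∀ k, gfun M (↑(Vk M U (k0+k)) : Set (Zd d)) n z ω =
      μ (cylA (↑(Vk M U (k0+k))) n ∩ {w | w n = z}) :=
    fun k => (walk_gfun (Finset.mem_coe.mpr (Vk_zero_mem _)) hw hg n z).symm
  have hmonoSet : Monotone fun k => cylA (↑(Vk M U (k0+k)) : Set (Zd d)) n ∩ {w | w n = z} := by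
    intro k l hkl
    exact Set.inter_subset_inter_left _
      (cylA_mono (Finset.coe_subset.mpr (Vk_mono (by omega))) n)
  have hmono : Monotone fun k => gfun M (↑(Vk M U (k0+k)) : Set (Zd d)) n z ω := by
    intro k l hkl
    dsimp only
    rw [hrep k, hrep l]
    exact measure_mono (hmonoSet hkl)
  refine ⟨hmono, ?_⟩
  have htend := tendsto_measure_iUnion_atTop (μ := μ) hmonoSet
  have hUeq : μ (⋃ k, cylA (↑(Vk M U (k0+k)) : Set (Zd d)) n ∩ {w | w n = z}) =
      μ (cylA U n ∩ {w | w n = z}) := by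
    refine le_antisymm (measure_mono (Set.iUnion_subset fun k =>
      Set.inter_subset_inter_left _ (cylA_mono (Vk_sub h0U _) n))) ?_
    set bad : Set (Traj d) :=
      {w : Traj d | w 0 ≠ 0} ∪ ⋃ m, {w : Traj d | w (m+1) - w m ∉ box d M} with hbaddef
    have hbad : μ bad = 0 :=
      measure_union_null (walk_null0 hw) (measure_iUnion_null fun m => walk_notbox hw hg m)
    have hsub : cylA U n ∩ {w | w n = z} ⊆
        (⋃ k, cylA (↑(Vk M U (k0+k)) : Set (Zd d)) n ∩ {w | w n = z}) ∪ bad := by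
      intro w hw'
      by_cases hb : w ∈ bad
      · exact Or.inr hb
      · left
        simp only [hbaddef, Set.mem_union, Set.mem_setOf_eq, Set.mem_iUnion, not_or,
          not_exists, not_not] at hb
        obtain ⟨hb0, hbs⟩ := hb
        have hm : ∀ m ≤ n, w m ∈ Vk M U m := by
          intro m
          induction m with
          | zero => intro _; rw [hb0]; exact Vk_zero_mem 0
          | succ m ih =>
              intro hm'
              have h1 := ih (by omega)
              have h2 : w (m+1) = w m + (w (m+1) - w m) := by abel
              rw [h2]
              exact Vk_succ_mem h1 (hbs m) (by rw [← h2]; exact hw'.1 (m+1) hm')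
        refine Set.mem_iUnion.mpr ⟨n, ?_, hw'.2⟩
        intro m hm'
        exact Finset.mem_coe.mpr (Vk_mono (by omega) (hm m hm'))
    calc μ (cylA U n ∩ {w | w n = z}) ≤
        μ ((⋃ k, cylA (↑(Vk M U (k0+k)) : Set (Zd d)) n ∩ {w | w n = z}) ∪ bad) :=
          measure_mono hsub
      _ ≤ μ (⋃ k, cylA (↑(Vk M U (k0+k)) : Set (Zd d)) n ∩ {w | w n = z}) + μ bad :=
          measure_union_le _ _
      _ = μ (⋃ k, cylA (↑(Vk M U (k0+k)) : Set (Zd d)) n ∩ {w | w n = z}) := by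
          rw [hbad, add_zero]
  have hgoal : gfun M U n z ω = μ (cylA U n ∩ {w | w n = z}) :=
    (walk_gfun h0U hw hg n z).symm
  rw [hgoal, ← hUeq]
  exact (tendsto_congr fun k => hrep k).mpr htend

lemma gG_tendsto (h0U : (0:Zd d) ∈ U) {μ : Measure (Traj d)} {ω : Env d}
    (hw : IsWalk μ ω 0) (hg : GoodEnv M ω) (k0 : ℕ) (z : Zd d) :
    (∀ k, gG M (↑(Vk M U (k0+k)) : Set (Zd d)) z ω ≤ gG M U z ω) ∧
    Tendsto (fun k => gG M (↑(Vk M U (k0+k)) : Set (Zd d)) z ω) atTop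
      (nhds (gG M U z ω)) := by
  have hn := fun n => gfun_tendsto (U := U) h0U hw hg k0 z n
  have hsup : ∀ n, (⨆ k, gfun M (↑(Vk M U (k0+k)) : Set (Zd d)) n z ω) = gfun M U n z ω :=
    fun n => tendsto_nhds_unique (tendsto_atTop_iSup (hn n).1) (hn n).2
  have hle : ∀ k n, gfun M (↑(Vk M U (k0+k)) : Set (Zd d)) n z ω ≤ gfun M U n z ω := by
    intro k n
    rw [← hsup n]
    exact le_iSup (fun k => gfun M (↑(Vk M U (k0+k)) : Set (Zd d)) n z ω) k
  have hleG : ∀ k, gG M (↑(Vk M U (k0+k)) : Set (Zd d)) z ω ≤ gG M U z ω :=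
    fun k => ENNReal.tsum_le_tsum fun n => hle k n
  refine ⟨hleG, ?_⟩
  have hmonoG : Monotone fun k => gG M (↑(Vk M U (k0+k)) : Set (Zd d)) z ω :=
    fun k l hkl => ENNReal.tsum_le_tsum fun n => (hn n).1 hkl
  have hsupG : (⨆ k, gG M (↑(Vk M U (k0+k)) : Set (Zd d)) z ω) = gG M U z ω := by
    unfold gG
    have h1 : ∀ k, (∑' n, gfun M (↑(Vk M U (k0+k)) : Set (Zd d)) n z ω) =
        ∫⁻ n, gfun M (↑(Vk M U (k0+k)) : Set (Zd d)) n z ω ∂Measure.count :=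
      fun k => (lintegral_count _).symm
    simp only [h1]
    rw [← lintegral_iSup (fun k => measurable_of_countable _) (by
      intro k l hkl n
      exact (hn n).1 hkl)]
    rw [show (fun n => ⨆ k, gfun M (↑(Vk M U (k0+k)) : Set (Zd d)) n z ω) =
      fun n => gfun M U n z ω from funext hsup]
    exact lintegral_count _
  rw [← hsupG]
  exact tendsto_atTop_iSup hmonoG

end part7

section part8
variable {d M : ℕ}

lemma kalikow_limit {ℓ : Fin d → ℝ} {ε : ℝ} {IP : Measure (Env d)}
    {P : Env d → Measure (Traj d)} {U : Set (Zd d)}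
    (hP : ∀ᵐ ω ∂IP, IsWalk (P ω) ω 0) (hgood : ∀ᵐ ω ∂IP, GoodEnv M ω)
    (hkal2 : ∀ V : Finset (Zd d), (0 : Zd d) ∈ V → MConn M V → ∀ x ∈ V,
      ε * ∫ ω, (exitGreen (P ω) (↑V) x).toReal ∂IP ≤
        ∫ ω, driftl M ℓ (shiftE x ω) * (exitGreen (P ω) (↑V) x).toReal ∂IP)
    (h0U : (0:Zd d) ∈ U) (hconn : MConnSet M U) {z : Zd d} (hz : z ∈ U)
    (hfinz : ∫⁻ ω, gG M U z ω ∂IP ≠ ⊤) :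
    ε * ∫ ω, (gG M U z ω).toReal ∂IP ≤
      ∫ ω, driftl M ℓ (shiftE z ω) * (gG M U z ω).toReal ∂IP := by
  obtain ⟨k0, hk0⟩ := Vk_cover h0U hconn z hz
  set Cb := (M:ℝ) * ∑ i, |ℓ i| with hCb
  have hGint : Integrable (fun ω => (gG M U z ω).toReal) IP :=
    integrable_toReal_of_lintegral_ne_top (gG_meas M U z).aemeasurable hfinz
  have haefin : ∀ᵐ ω ∂IP, gG M U z ω ≠ ⊤ := by
    filter_upwards [ae_lt_top (gG_meas M U z) hfinz] with ω h
    exact h.ne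
  have h1 : Tendsto (fun k => ∫ ω, (gG M (↑(Vk M U (k0+k)) : Set (Zd d)) z ω).toReal ∂IP)
      atTop (nhds (∫ ω, (gG M U z ω).toReal ∂IP)) := by
    refine tendsto_integral_of_dominated_convergence _
      (fun k => (gG_meas M _ z).ennreal_toReal.aestronglyMeasurable) hGint ?_ ?_
    · intro k
      filter_upwards [hP, hgood, haefin] with ω hw hg hfin
      rw [Real.norm_eq_abs, abs_of_nonneg ENNReal.toReal_nonneg]
      exact ENNReal.toReal_mono hfin ((gG_tendsto h0U hw hg k0 z).1 k)
    · filter_upwards [hP, hgood, haefin] with ω hw hg hfin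
      exact (ENNReal.tendsto_toReal hfin).comp ((gG_tendsto h0U hw hg k0 z).2)
  have h2 : Tendsto (fun k => ∫ ω, driftl M ℓ (shiftE z ω) *
        (gG M (↑(Vk M U (k0+k)) : Set (Zd d)) z ω).toReal ∂IP)
      atTop (nhds (∫ ω, driftl M ℓ (shiftE z ω) * (gG M U z ω).toReal ∂IP)) := by
    refine tendsto_integral_of_dominated_convergence (fun ω => Cb * (gG M U z ω).toReal)
      (fun k => ((driftl_meas M ℓ z).mul (gG_meas M _ z).ennreal_toReal).aestronglyMeasurable)
      (hGint.const_mul Cb) ?_ ?_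
    · intro k
      filter_upwards [hP, hgood, haefin] with ω hw hg hfin
      rw [Real.norm_eq_abs, abs_mul]
      have hb1 : |driftl M ℓ (shiftE z ω)| ≤ Cb := driftl_abs_le hg ℓ z
      have hb2 : |(gG M (↑(Vk M U (k0+k)) : Set (Zd d)) z ω).toReal| ≤ (gG M U z ω).toReal := by
        rw [abs_of_nonneg ENNReal.toReal_nonneg]
        exact ENNReal.toReal_mono hfin ((gG_tendsto h0U hw hg k0 z).1 k)
      exact mul_le_mul hb1 hb2 (abs_nonneg _) (le_trans (abs_nonneg _) hb1)
    · filter_upwards [hP, hgood, haefin] with ω hw hg hfin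
      exact Tendsto.const_mul _ ((ENNReal.tendsto_toReal hfin).comp ((gG_tendsto h0U hw hg k0 z).2))
  have h3 : ∀ k, ε * ∫ ω, (gG M (↑(Vk M U (k0+k)) : Set (Zd d)) z ω).toReal ∂IP ≤
      ∫ ω, driftl M ℓ (shiftE z ω) * (gG M (↑(Vk M U (k0+k)) : Set (Zd d)) z ω).toReal ∂IP := by
    intro k
    have hzV : z ∈ Vk M U (k0+k) := Vk_mono (by omega) hk0
    have h0V : (0:Zd d) ∈ Vk M U (k0+k) := Vk_zero_mem _
    have hcongr : ∀ᵐ ω ∂IP, exitGreen (P ω) (↑(Vk M U (k0+k))) z =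
        gG M (↑(Vk M U (k0+k)) : Set (Zd d)) z ω := by
      filter_upwards [hP, hgood] with ω hw hg
      exact exitGreen_eq_gG (Finset.mem_coe.mpr h0V) hw hg (Finset.mem_coe.mpr hzV)
    have e1 : ∫ ω, (exitGreen (P ω) (↑(Vk M U (k0+k))) z).toReal ∂IP =
        ∫ ω, (gG M (↑(Vk M U (k0+k)) : Set (Zd d)) z ω).toReal ∂IP := by
      refine integral_congr_ae ?_
      filter_upwards [hcongr] with ω h
      rw [h]
    have e2 : ∫ ω, driftl M ℓ (shiftE z ω) * (exitGreen (P ω) (↑(Vk M U (k0+k))) z).toReal ∂IP =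
        ∫ ω, driftl M ℓ (shiftE z ω) * (gG M (↑(Vk M U (k0+k)) : Set (Zd d)) z ω).toReal ∂IP := by
      refine integral_congr_ae ?_
      filter_upwards [hcongr] with ω h
      rw [h]
    rw [← e1, ← e2]
    exact hkal2 _ h0V (Vk_MConn _) z hzV
  exact le_of_tendsto_of_tendsto (h1.const_mul ε) h2 (Eventually.of_forall h3)

end part8


/-- under Kalikow's condition with constant `ε` in direction `ℓ`,
for any `M`-connected `U ∋ 0` with `E_0(T_U) < ∞`, one has
`E_0(X_{T_U}·ℓ) ≥ ε E_0(T_U)`.  (Here `E_0(T_U) = Σ_n P_0(T_U > n)`.) -/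
theorem kalikow_ballistic {d M : ℕ} (ℓ : Fin d → ℝ) (ε : ℝ)
    (IP : Measure (Env d)) [IsProbabilityMeasure IP]
    (P : Env d → Measure (Traj d)) (hP : ∀ᵐ ω ∂IP, IsWalk (P ω) ω 0)
    (hgood : ∀ᵐ ω ∂IP, GoodEnv M ω)
    (ann : Measure (Traj d))
    (hann : ∀ S : Set (Traj d), MeasurableSet S → ann S = ∫⁻ ω, P ω S ∂IP)
    (hkal : KalikowCond IP P M ℓ ε)
    (U : Set (Zd d)) (h0U : (0 : Zd d) ∈ U) (hconn : MConnSet M U)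
    (hfin : (∑' n : ℕ, ann {w | ∀ m ≤ n, w m ∈ U}) ≠ ⊤) :
    ε * (∑' n : ℕ, ann {w | ∀ m ≤ n, w m ∈ U}).toReal ≤
      ∫ w, dotl (w (exitTime U w)) ℓ ∂ann := by
  classical
  obtain ⟨hε, hkal2⟩ := hkal
  have hfin' : (∑' n : ℕ, ann (cylA U n)) ≠ ⊤ := hfin
  have hAfin : ∀ n, ann (cylA U n) ≠ ⊤ := ENNReal.ne_top_of_tsum_ne_top hfin'
  set Cb : ℝ := (M:ℝ) * ∑ i, |ℓ i| with hCbdef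
  set c : Zd d × ℕ × Zd d → ℝ :=
    fun i => dotl i.2.2 ℓ * (ann (cylD U i.2.1 i.1 i.2.2)).toReal with hcdef
  -- total mass bound for the step events
  have hDb : ∑' i : Zd d × ℕ × Zd d, ann (cylD U i.2.1 i.1 i.2.2)
      ≤ ∑' n, ann (cylA U n) := by
    calc ∑' i : Zd d × ℕ × Zd d, ann (cylD U i.2.1 i.1 i.2.2)
        = ∑' z : Zd d, ∑' q : ℕ × Zd d, ann (cylD U q.1 z q.2) :=
          ENNReal.tsum_prod (f := fun (z : Zd d) (q : ℕ × Zd d) => ann (cylD U q.1 z q.2))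
      _ = ∑' z : Zd d, ∑' n : ℕ, ∑' e : Zd d, ann (cylD U n z e) :=
          tsum_congr fun z => ENNReal.tsum_prod (f := fun (n : ℕ) (e : Zd d) => ann (cylD U n z e))
      _ = ∑' n : ℕ, ∑' z : Zd d, ∑' e : Zd d, ann (cylD U n z e) := ENNReal.tsum_comm
      _ = ∑' n : ℕ, ∑' q : Zd d × Zd d, ann (cylD U n q.1 q.2) :=
          tsum_congr fun n => (ENNReal.tsum_prod (f := fun (z : Zd d) (e : Zd d) => ann (cylD U n z e))).symm
      _ ≤ ∑' n, ann (cylA U n) := ENNReal.tsum_le_tsum fun n => ann_sum_D n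
  have hDfin : (∑' i : Zd d × ℕ × Zd d, ann (cylD U i.2.1 i.1 i.2.2)) ≠ ⊤ :=
    ne_top_of_le_ne_top hfin' hDb
  -- Step A : the expectation of the exit functional as a sum over step events
  have hae1 : ∀ᵐ w ∂ann, w 0 = 0 := by
    rw [ae_iff]
    exact ann_null0 hP hann
  have hae2 : ∀ᵐ w ∂ann, {j | w j ∉ U}.Nonempty := by
    rw [ae_iff]
    have hset : {w : Traj d | ¬ {j | w j ∉ U}.Nonempty} = ⋂ n, cylA U n := by
      ext w
      simp only [Set.mem_setOf_eq, Set.not_nonempty_iff_eq_empty,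
        Set.eq_empty_iff_forall_notMem, not_not, Set.mem_iInter]
      constructor
      · intro h n m _
        exact h m
      · intro h j
        exact h j j le_rfl
    rw [hset]
    exact ann_neverexit hfin'
  have hIeq : ∫ w, dotl (w (exitTime U w)) ℓ ∂ann = ∑' i : Zd d × ℕ × Zd d, c i := by
    have hfeq : (fun w => dotl (w (exitTime U w)) ℓ) =ᵐ[ann]
        (fun w => ∑' i : Zd d × ℕ × Zd d,
          (cylD U i.2.1 i.1 i.2.2).indicator (fun _ => dotl i.2.2 ℓ) w) := by
      filter_upwards [hae1, hae2] with w h1 h2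
      exact (tsum_indicator_eq ℓ h1 h2).symm
    have hnormlint : ∀ i : Zd d × ℕ × Zd d,
        ∫⁻ w, ‖(cylD U i.2.1 i.1 i.2.2).indicator (fun _ => dotl i.2.2 ℓ) w‖₊ ∂ann ≤
          ENNReal.ofReal Cb * ann (cylD U i.2.1 i.1 i.2.2) := by
      rintro ⟨z, n, e⟩
      have hind : ∀ w, ((‖(cylD U n z e).indicator (fun _ => dotl e ℓ) w‖₊ : ℝ≥0∞)) =
          (cylD U n z e).indicator (fun _ => ((‖dotl e ℓ‖₊ : ℝ≥0∞))) w := by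
        intro w
        by_cases hw : w ∈ cylD U n z e
        · rw [Set.indicator_of_mem hw, Set.indicator_of_mem hw]
        · rw [Set.indicator_of_notMem hw, Set.indicator_of_notMem hw]
          simp
      rw [lintegral_congr hind, lintegral_indicator_const (measSet_cylD U n z e)]
      by_cases he : e ∈ box d M
      · refine mul_le_mul_left ?_ _
        rw [← enorm_eq_nnnorm, Real.enorm_eq_ofReal_abs]
        exact ENNReal.ofReal_le_ofReal (dotl_bound he ℓ)
      · rw [ann_cylD_notbox hP hgood hann h0U n z e he]
        simp
    have hnormsum : (∑' i : Zd d × ℕ × Zd d,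
        ∫⁻ w, ‖(cylD U i.2.1 i.1 i.2.2).indicator (fun _ => dotl i.2.2 ℓ) w‖₊ ∂ann) ≠ ⊤ := by
      refine ne_top_of_le_ne_top ?_ (ENNReal.tsum_le_tsum hnormlint)
      rw [ENNReal.tsum_mul_left]
      exact ENNReal.mul_ne_top ENNReal.ofReal_ne_top hDfin
    have hIT := integral_tsum (μ := ann)
      (f := fun i : Zd d × ℕ × Zd d =>
        (cylD U i.2.1 i.1 i.2.2).indicator fun _ => dotl i.2.2 ℓ)
      (fun i =>
        (measurable_const.indicator (measSet_cylD U i.2.1 i.1 i.2.2)).aestronglyMeasurable)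
      hnormsum
    rw [integral_congr_ae hfeq, hIT]
    refine tsum_congr fun i => ?_
    rw [integral_indicator_const _ (measSet_cylD U i.2.1 i.1 i.2.2), smul_eq_mul, mul_comm]
    rfl
  -- Step B : summability
  have hcmaj : ∀ i : Zd d × ℕ × Zd d, ‖c i‖ ≤ Cb * (ann (cylD U i.2.1 i.1 i.2.2)).toReal := by
    rintro ⟨z, n, e⟩
    simp only [hcdef]
    rw [Real.norm_eq_abs, abs_mul, abs_of_nonneg ENNReal.toReal_nonneg]
    by_cases he : e ∈ box d M
    · exact mul_le_mul_of_nonneg_right (dotl_bound he ℓ) ENNReal.toReal_nonneg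
    · rw [ann_cylD_notbox hP hgood hann h0U n z e he]
      simp
  have hcsum : Summable c :=
    Summable.of_norm_bounded ((ENNReal.summable_toReal hDfin).mul_left Cb) hcmaj
  -- lintegrals of gfun and gG
  have hlg : ∀ (n : ℕ) (z : Zd d),
      ∫⁻ ω, gfun M U n z ω ∂IP = ann (cylA U n ∩ {w | w n = z}) :=
    fun n z => (ann_gfun hP hgood hann h0U n z).symm
  have hlg_fin : ∀ (n : ℕ) (z : Zd d), ∫⁻ ω, gfun M U n z ω ∂IP ≠ ⊤ := by
    intro n z
    rw [hlg]
    exact ne_top_of_le_ne_top (hAfin n) (measure_mono Set.inter_subset_left)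
  have hg_int : ∀ (n : ℕ) (z : Zd d),
      Integrable (fun ω => (gfun M U n z ω).toReal) IP :=
    fun n z => integrable_toReal_of_lintegral_ne_top (gfun_meas M U n z).aemeasurable
      (hlg_fin n z)
  have hlG : ∀ z : Zd d,
      ∫⁻ ω, gG M U z ω ∂IP = ∑' n, ann (cylA U n ∩ {w | w n = z}) := by
    intro z
    rw [show (fun ω => gG M U z ω) = fun ω => ∑' n, gfun M U n z ω from rfl,
      lintegral_tsum fun n => (gfun_meas M U n z).aemeasurable]
    exact tsum_congr fun n => hlg n z
  have hlG_fin : ∀ z : Zd d, ∫⁻ ω, gG M U z ω ∂IP ≠ ⊤ := by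
    intro z
    rw [hlG]
    refine ne_top_of_le_ne_top hfin' (ENNReal.tsum_le_tsum fun n =>
      measure_mono Set.inter_subset_left)
  -- Step C : summing over the jump
  have hq : ∀ (z : Zd d) (n : ℕ), (∑' e : Zd d, c (z, n, e)) =
      ∫ ω, driftl M ℓ (shiftE z ω) * (gfun M U n z ω).toReal ∂IP := by
    intro z n
    have hout : ∀ e ∉ box d M, c (z, n, e) = 0 := by
      intro e he
      simp only [hcdef]
      rw [ann_cylD_notbox hP hgood hann h0U n z e he]
      simp
    rw [tsum_eq_sum hout]
    have hterm : ∀ e ∈ box d M, c (z, n, e) =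
        ∫ ω, dotl e ℓ * ((ω z e) * (gfun M U n z ω).toReal) ∂IP := by
      intro e he
      have haelt : ∀ᵐ ω ∂IP, ENNReal.ofReal (ω z e) * gfun M U n z ω < ⊤ := by
        filter_upwards [hP, hgood] with ω hw hg
        exact ENNReal.mul_lt_top ENNReal.ofReal_lt_top
          (lt_of_le_of_lt (gfun_le_one h0U hw hg n z) ENNReal.one_lt_top)
      have hm1 : Measurable fun ω : Env d => ω z e :=
        (measurable_pi_apply e).comp (measurable_pi_apply z)
      have hm2 : Measurable fun ω : Env d => ENNReal.ofReal (ω z e) * gfun M U n z ω :=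
        hm1.ennreal_ofReal.mul (gfun_meas M U n z)
      have h2 : (ann (cylD U n z e)).toReal =
          ∫ ω, (ω z e) * (gfun M U n z ω).toReal ∂IP := by
        rw [ann_cylD hP hgood hann h0U n z e]
        calc (∫⁻ ω, ENNReal.ofReal (ω z e) * gfun M U n z ω ∂IP).toReal
            = ∫ ω, (ENNReal.ofReal (ω z e) * gfun M U n z ω).toReal ∂IP :=
              (integral_toReal hm2.aemeasurable haelt).symm
          _ = ∫ ω, (ω z e) * (gfun M U n z ω).toReal ∂IP := by
              refine integral_congr_ae ?_
              filter_upwards [hgood] with ω hg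
              rw [ENNReal.toReal_mul, ENNReal.toReal_ofReal (hg.1 z e)]
      simp only [hcdef]
      rw [h2]
      exact (integral_const_mul _ _).symm
    rw [Finset.sum_congr rfl hterm]
    have hint : ∀ e ∈ box d M,
        Integrable (fun ω => dotl e ℓ * ((ω z e) * (gfun M U n z ω).toReal)) IP := by
      intro e he
      refine Integrable.const_mul ?_ _
      refine Integrable.mono' (hg_int n z) ?_ ?_
      · have hm1 : Measurable fun ω : Env d => ω z e :=
          (measurable_pi_apply e).comp (measurable_pi_apply z)
        exact (hm1.mul (gfun_meas M U n z).ennreal_toReal).aestronglyMeasurable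
      · filter_upwards [hgood] with ω hg
        rw [Real.norm_eq_abs, abs_mul, abs_of_nonneg (hg.1 z e),
          abs_of_nonneg ENNReal.toReal_nonneg]
        have hle1 : ω z e ≤ 1 := by
          calc ω z e ≤ ∑ e' ∈ box d M, ω z e' :=
                Finset.single_le_sum (fun i _ => hg.1 z i) he
            _ = 1 := hg.2.1 z
        exact mul_le_of_le_one_left ENNReal.toReal_nonneg hle1
    rw [← integral_finset_sum (box d M) hint]
    refine integral_congr_ae (Eventually.of_forall fun ω => ?_)
    dsimp only
    rw [driftl_shift, Finset.sum_mul]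
    exact Finset.sum_congr rfl fun e he => by ring
  -- Step D : summing over time
  have hQ : ∀ z : Zd d,
      (∑' n : ℕ, ∫ ω, driftl M ℓ (shiftE z ω) * (gfun M U n z ω).toReal ∂IP) =
        ∫ ω, driftl M ℓ (shiftE z ω) * (gG M U z ω).toReal ∂IP := by
    intro z
    have hmeas : ∀ n : ℕ, AEStronglyMeasurable
        (fun ω => driftl M ℓ (shiftE z ω) * (gfun M U n z ω).toReal) IP :=
      fun n => ((driftl_meas M ℓ z).mul (gfun_meas M U n z).ennreal_toReal).aestronglyMeasurable
    have hbnd : (∑' n : ℕ,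
        ∫⁻ ω, ‖driftl M ℓ (shiftE z ω) * (gfun M U n z ω).toReal‖₊ ∂IP) ≠ ⊤ := by
      have hb1 : ∀ n : ℕ, ∫⁻ ω, ‖driftl M ℓ (shiftE z ω) * (gfun M U n z ω).toReal‖₊ ∂IP ≤
          ENNReal.ofReal Cb * ann (cylA U n) := by
        intro n
        have hstep : ∫⁻ ω, ‖driftl M ℓ (shiftE z ω) * (gfun M U n z ω).toReal‖₊ ∂IP ≤
            ∫⁻ ω, ENNReal.ofReal Cb * gfun M U n z ω ∂IP := by
          refine lintegral_mono_ae ?_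
          filter_upwards [hP, hgood] with ω hw hg
          rw [← enorm_eq_nnnorm, Real.enorm_eq_ofReal_abs, abs_mul, abs_of_nonneg ENNReal.toReal_nonneg]
          have hfin2 : gfun M U n z ω ≠ ⊤ :=
            (lt_of_le_of_lt (gfun_le_one h0U hw hg n z) ENNReal.one_lt_top).ne
          calc ENNReal.ofReal (|driftl M ℓ (shiftE z ω)| * (gfun M U n z ω).toReal)
              ≤ ENNReal.ofReal (Cb * (gfun M U n z ω).toReal) :=
                ENNReal.ofReal_le_ofReal
                  (mul_le_mul_of_nonneg_right (driftl_abs_le hg ℓ z) ENNReal.toReal_nonneg)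
            _ = ENNReal.ofReal Cb * ENNReal.ofReal ((gfun M U n z ω).toReal) :=
                ENNReal.ofReal_mul (by positivity)
            _ = ENNReal.ofReal Cb * gfun M U n z ω := by rw [ENNReal.ofReal_toReal hfin2]
        calc ∫⁻ ω, ‖driftl M ℓ (shiftE z ω) * (gfun M U n z ω).toReal‖₊ ∂IP
            ≤ ∫⁻ ω, ENNReal.ofReal Cb * gfun M U n z ω ∂IP := hstep
          _ = ENNReal.ofReal Cb * ∫⁻ ω, gfun M U n z ω ∂IP :=
              lintegral_const_mul _ (gfun_meas M U n z)
          _ ≤ ENNReal.ofReal Cb * ann (cylA U n) := by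
              refine mul_le_mul_right ?_ _
              rw [hlg]
              exact measure_mono Set.inter_subset_left
      refine ne_top_of_le_ne_top ?_ (ENNReal.tsum_le_tsum hb1)
      rw [ENNReal.tsum_mul_left]
      exact ENNReal.mul_ne_top ENNReal.ofReal_ne_top hfin'
    have hptw : ∀ᵐ ω ∂IP,
        (∑' n : ℕ, driftl M ℓ (shiftE z ω) * (gfun M U n z ω).toReal) =
          driftl M ℓ (shiftE z ω) * (gG M U z ω).toReal := by
      filter_upwards [hP, hgood] with ω hw hg
      rw [tsum_mul_left]
      congr 1
      exact (ENNReal.tsum_toReal_eq fun n =>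
        (lt_of_le_of_lt (gfun_le_one h0U hw hg n z) ENNReal.one_lt_top).ne).symm
    rw [← integral_tsum hmeas hbnd]
    exact integral_congr_ae hptw
  -- Step E : the Kalikow bound for each site
  have hE : ∀ z : Zd d, ε * (∫⁻ ω, gG M U z ω ∂IP).toReal ≤
      ∑' q : ℕ × Zd d, c (z, q) := by
    intro z
    have hchain : (∑' q : ℕ × Zd d, c (z, q)) =
        ∫ ω, driftl M ℓ (shiftE z ω) * (gG M U z ω).toReal ∂IP := by
      rw [Summable.tsum_prod' (hcsum.prod_factor z) fun n => (hcsum.prod_factor z).prod_factor n]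
      rw [tsum_congr fun n => hq z n]
      exact hQ z
    rw [hchain]
    by_cases hzU : z ∈ U
    · have hkl := kalikow_limit hP hgood hkal2 h0U hconn hzU (hlG_fin z)
      calc ε * (∫⁻ ω, gG M U z ω ∂IP).toReal
          = ε * ∫ ω, (gG M U z ω).toReal ∂IP := by
            rw [integral_toReal (gG_meas M U z).aemeasurable
              (ae_lt_top (gG_meas M U z) (hlG_fin z))]
        _ ≤ _ := hkl
    · have hz0 : ∀ ω : Env d, gG M U z ω = 0 := by
        intro ω
        refine ENNReal.tsum_eq_zero.mpr fun n => gfun_notmem h0U hzU n ω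
      simp only [hz0]
      simp
  -- Step F : assembling
  have htot : (∑' z : Zd d, ∫⁻ ω, gG M U z ω ∂IP) = ∑' n, ann (cylA U n) := by
    rw [tsum_congr hlG, ENNReal.tsum_comm]
    exact tsum_congr fun n => ann_sum_z hP hgood hann h0U n
  have hsum1 : Summable fun z : Zd d => (∫⁻ ω, gG M U z ω ∂IP).toReal :=
    ENNReal.summable_toReal (by rw [htot]; exact hfin')
  have hsum2 : Summable fun z : Zd d => ∑' q : ℕ × Zd d, c (z, q) :=
    (HasSum.prod_fiberwise hcsum.hasSum fun z => (hcsum.prod_factor z).hasSum).summable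
  have hS_toReal : (∑' n, ann (cylA U n)).toReal =
      ∑' z : Zd d, (∫⁻ ω, gG M U z ω ∂IP).toReal := by
    rw [← htot, ENNReal.tsum_toReal_eq hlG_fin]
  show ε * (∑' n, ann (cylA U n)).toReal ≤ ∫ w, dotl (w (exitTime U w)) ℓ ∂ann
  rw [hIeq, hS_toReal, Summable.tsum_prod' hcsum fun z => hcsum.prod_factor z, ← tsum_mul_left]
  exact Summable.tsum_le_tsum (fun z => hE z) (hsum1.mul_left ε) hsum2
end
end

section
/- (Kozlov's lemma, mutual absolute continuity part) Let IP be an ergodic shift-invariant measure on environments over Z^d satisfying the weak ellipticity condition. If IP_∞ is a probability measure invariant for the environment process (T^{X_n}ω)_{n≥0} and absolutely continuous with respect to IP, then IP and IP_∞ are mutually absolutely continuous. -/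
open MeasureTheory Filter Set
open scoped ENNReal

noncomputable section

section KozlovAux

variable {d : ℕ}

lemma shiftE_comp (j k : Zd d) (ω : Env d) : shiftE k (shiftE j ω) = shiftE (j + k) ω := by
  funext x e
  simp [shiftE, add_assoc, add_comm, add_left_comm]

lemma shiftE_zero : shiftE (0 : Zd d) = id := by
  funext ω x e
  simp [shiftE]

lemma measurable_shiftE (k : Zd d) : Measurable (shiftE k : Env d → Env d) :=
  measurable_pi_lambda _ fun x => measurable_pi_apply (k + x)

end KozlovAux

/-- Kozlov's lemma, mutual absolute continuity: if `IP` is ergodic,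
shift invariant, finite range and weakly elliptic, and `IP_∞` is an invariant
probability measure for the environment process with `IP_∞ ≪ IP`, then `IP ≪ IP_∞`
(so `IP` and `IP_∞` are mutually absolutely continuous). -/
theorem kozlov_mutual_ac {d M : ℕ} (ℓ : Fin d → ℝ)
    (IP : Measure (Env d)) [IsProbabilityMeasure IP]
    (herg : ErgEnv IP) (hgood : ∀ᵐ ω ∂IP, GoodEnv M ω)
    (hell : WeakElliptic IP ℓ)
    (IPinf : Measure (Env d)) [IsProbabilityMeasure IPinf]
    (hinv : EnvInvariant M IPinf) (hac : IPinf ≪ IP) :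
    IP ≪ IPinf := by
  classical
  set G : Env d → ℝ≥0∞ := IPinf.rnDeriv IP with hGdef
  have hGmeas : Measurable G := Measure.measurable_rnDeriv _ _
  have hwd : IP.withDensity G = IPinf := Measure.withDensity_rnDeriv_eq _ _ hac
  set Z : Set (Env d) := {ω | G ω = 0} with hZdef
  have hZmeas : MeasurableSet Z := hGmeas (measurableSet_singleton 0)
  -- IPinf gives no mass to Z
  have hIPinfZ : IPinf Z = 0 := by
    rw [← hwd, withDensity_apply _ hZmeas]
    calc ∫⁻ ω in Z, G ω ∂IP = ∫⁻ _ω in Z, 0 ∂IP :=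
          setLIntegral_congr_fun hZmeas (fun ω hω => hω)
      _ = 0 := lintegral_zero
  -- measurability of the kernel integrand
  have hFmeas : Measurable (fun ω : Env d =>
      ∑ e ∈ box d M, ENNReal.ofReal (ω 0 e) * Z.indicator 1 (shiftE e ω)) := by
    refine Finset.measurable_sum _ fun e _ => Measurable.mul ?_ ?_
    · exact ENNReal.measurable_ofReal.comp ((measurable_pi_apply e).comp (measurable_pi_apply 0))
    · exact (measurable_one.indicator hZmeas).comp (measurable_shiftE e)
  -- the key a.e. identity obtained from invariance of IPinf
  have key : ∀ᵐ ω ∂IP,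
      G ω * ∑ e ∈ box d M, ENNReal.ofReal (ω 0 e) * Z.indicator 1 (shiftE e ω) = 0 := by
    have h0 : ∫⁻ ω, G ω * ∑ e ∈ box d M,
        ENNReal.ofReal (ω 0 e) * Z.indicator 1 (shiftE e ω) ∂IP = 0 := by
      have := lintegral_withDensity_eq_lintegral_mul IP hGmeas hFmeas
      rw [hwd] at this
      calc ∫⁻ ω, G ω * ∑ e ∈ box d M,
            ENNReal.ofReal (ω 0 e) * Z.indicator 1 (shiftE e ω) ∂IP
          = ∫⁻ ω, ∑ e ∈ box d M, ENNReal.ofReal (ω 0 e) * Z.indicator 1 (shiftE e ω) ∂IPinf :=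
            (this).symm
        _ = IPinf Z := hinv Z hZmeas
        _ = 0 := hIPinfZ
    exact (lintegral_eq_zero_iff (hGmeas.mul hFmeas)).mp h0
  -- a.e. subset property for admissible unit directions
  have hsubset : ∀ e : Zd d, (∑ i, (e i) * (e i)) = 1 → 0 ≤ dotl e ℓ →
      ∀ᵐ ω ∂IP, ω ∈ shiftE e ⁻¹' Z → ω ∈ Z := by
    intro e he hel
    filter_upwards [key, hgood, hell] with ω hk hg hl
    intro hmem
    by_contra hω
    have hGne : G ω ≠ 0 := hω
    have hsum : ∑ e' ∈ box d M, ENNReal.ofReal (ω 0 e') * Z.indicator 1 (shiftE e' ω) = 0 := by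
      rcases mul_eq_zero.mp hk with h | h
      · exact absurd h hGne
      · exact h
    have hpos : 0 < ω 0 e := hl e he hel
    have hebox : e ∈ box d M := by
      by_contra hnb
      have := hg.2.2 0 e hnb
      rw [this] at hpos
      exact lt_irrefl _ hpos
    have hterm := (Finset.sum_eq_zero_iff.mp hsum) e hebox
    have hne : ENNReal.ofReal (ω 0 e) ≠ 0 := (ENNReal.ofReal_pos.mpr hpos).ne'
    rcases mul_eq_zero.mp hterm with h | h
    · exact hne h
    · rw [Set.indicator_of_mem (Set.mem_preimage.mp hmem)] at h
      exact one_ne_zero h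
  -- shifts are measure preserving
  have hmp : ∀ k : Zd d, MeasurePreserving (shiftE k) IP IP := fun k =>
    ⟨measurable_shiftE k, herg.1 k⟩
  -- a.e. equality for admissible unit directions
  have haeeq : ∀ e : Zd d, (∑ i, (e i) * (e i)) = 1 → 0 ≤ dotl e ℓ →
      shiftE e ⁻¹' Z =ᵐ[IP] Z := by
    intro e he hel
    refine ae_eq_of_ae_subset_of_measure_ge (hsubset e he hel) ?_
      ((hZmeas.preimage (measurable_shiftE e)).nullMeasurableSet) (measure_ne_top _ _)
    exact le_of_eq ((hmp e).measure_preimage hZmeas.nullMeasurableSet).symm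
  -- the set of shifts under which Z is a.e. invariant
  set K : Set (Zd d) := {k | shiftE k ⁻¹' Z =ᵐ[IP] Z} with hKdef
  have hK0 : (0 : Zd d) ∈ K := by
    have h : shiftE (0 : Zd d) ⁻¹' Z = Z := by rw [shiftE_zero]; rfl
    show shiftE (0 : Zd d) ⁻¹' Z =ᵐ[IP] Z
    rw [h]
    exact Filter.EventuallyEq.rfl
  have hpre : ∀ (j k : Zd d), shiftE k ⁻¹' (shiftE j ⁻¹' Z) = shiftE (k + j) ⁻¹' Z := by
    intro j k
    ext ω
    simp only [Set.mem_preimage, shiftE_comp]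
  have hKadd : ∀ j k : Zd d, j ∈ K → k ∈ K → j + k ∈ K := by
    intro j k hj hk
    have h1 : shiftE (j + k) ⁻¹' Z = shiftE k ⁻¹' (shiftE j ⁻¹' Z) := by
      rw [hpre, add_comm]
    rw [hKdef, Set.mem_setOf_eq, h1]
    exact (((hmp k).quasiMeasurePreserving).preimage_ae_eq hj).trans hk
  have hKneg : ∀ k : Zd d, k ∈ K → -k ∈ K := by
    intro k hk
    have h1 : shiftE (-k) ⁻¹' (shiftE k ⁻¹' Z) = Z := by
      rw [hpre, neg_add_cancel, shiftE_zero]; rfl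
    have h2 : shiftE (-k) ⁻¹' (shiftE k ⁻¹' Z) =ᵐ[IP] shiftE (-k) ⁻¹' Z :=
      ((hmp (-k)).quasiMeasurePreserving).preimage_ae_eq hk
    rw [h1] at h2
    exact h2.symm
  have hKsmul : ∀ (n : ℤ) (k : Zd d), k ∈ K → n • k ∈ K := by
    intro n k hk
    induction n using Int.induction_on with
    | zero => simp only [zero_smul]; exact hK0

    | succ m ih =>
        have := hKadd _ _ ih hk
        have heq : ((m : ℤ) + 1) • k = (m : ℤ) • k + k := by rw [add_smul, one_smul]
        rwa [heq]
    | pred m ih =>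
        have := hKadd _ _ ih (hKneg k hk)
        have heq : (-(m : ℤ) - 1) • k = (-(m : ℤ)) • k + -k := by
          rw [sub_smul, one_smul, sub_eq_add_neg]
        rwa [heq]
  -- the generators are in K
  have hKgen : ∀ i : Fin d, (Pi.single i (1 : ℤ) : Zd d) ∈ K := by
    intro i
    have hunit : (∑ j, ((Pi.single i (1 : ℤ) : Zd d) j) * ((Pi.single i (1 : ℤ) : Zd d) j)) = 1 := by
      simp [Pi.single_apply]
    have hunitneg :
        (∑ j, ((-(Pi.single i (1 : ℤ) : Zd d)) j) * ((-(Pi.single i (1 : ℤ) : Zd d)) j)) = 1 := by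
      simp [Pi.single_apply, apply_ite (fun z : ℤ => -z * -z)]
    have hdot : dotl (Pi.single i (1 : ℤ) : Zd d) ℓ = ℓ i := by
      simp [dotl, Pi.single_apply, ite_and]
    have hdotneg : dotl (-(Pi.single i (1 : ℤ) : Zd d) : Zd d) ℓ = -ℓ i := by
      have hneg : dotl (-(Pi.single i (1 : ℤ) : Zd d) : Zd d) ℓ
          = -dotl (Pi.single i (1 : ℤ) : Zd d) ℓ := by
        simp [dotl, neg_mul, Finset.sum_neg_distrib]
      rw [hneg, hdot]
    by_cases hsign : 0 ≤ ℓ i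
    · exact haeeq _ hunit (by rw [hdot]; exact hsign)
    · have hneg : (-(Pi.single i (1 : ℤ) : Zd d) : Zd d) ∈ K := by
        refine haeeq _ hunitneg ?_
        rw [hdotneg]
        linarith [not_le.mp hsign]
      have := hKneg _ hneg
      rwa [neg_neg] at this
  -- every shift preserves Z a.e.
  have hKall : ∀ k : Zd d, k ∈ K := by
    intro k
    have hk : k = ∑ i : Fin d, (k i) • (Pi.single i (1 : ℤ) : Zd d) := by
      funext j
      simp [Finset.sum_apply, Pi.single_apply, mul_ite]
    rw [hk]
    exact Finset.sum_induction _ (· ∈ K) hKadd hK0 fun i _ => hKsmul (k i) _ (hKgen i)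
  -- the strictly invariant modification of Z
  set Z2 : Set (Env d) := ⋂ k : Zd d, shiftE k ⁻¹' Z with hZ2def
  have hZ2meas : MeasurableSet Z2 :=
    MeasurableSet.iInter fun k => hZmeas.preimage (measurable_shiftE k)
  have hZ2inv : ∀ k : Zd d, shiftE k ⁻¹' Z2 = Z2 := by
    intro k
    ext ω
    simp only [hZ2def, Set.mem_iInter, Set.mem_preimage]
    constructor
    · intro h m
      have := h (m - k)
      rwa [shiftE_comp, add_sub_cancel] at this
    · intro h j
      have := h (k + j)
      rwa [shiftE_comp]
  have hZ2ae : Z2 =ᵐ[IP] Z := by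
    have hall : ∀ᵐ ω ∂IP, ∀ k : Zd d, (ω ∈ shiftE k ⁻¹' Z ↔ ω ∈ Z) := by
      rw [MeasureTheory.ae_all_iff]
      intro k
      exact Filter.eventuallyEq_set.mp (hKall k)
    rw [Filter.eventuallyEq_set]
    filter_upwards [hall] with ω hω
    constructor
    · intro h
      have h0 := Set.mem_iInter.mp h 0
      exact (hω 0).mp h0
    · intro h
      exact Set.mem_iInter.mpr fun k => (hω k).mpr h
  -- ergodicity: IP Z = 0 or 1
  have hZval : IP Z = 0 ∨ IP Z = 1 := by
    have := herg.2 Z2 hZ2meas hZ2inv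
    rwa [measure_congr hZ2ae] at this
  -- rule out IP Z = 1
  have hIPZ : IP Z = 0 := by
    rcases hZval with h0 | h1
    · exact h0
    · exfalso
      have hcompl : IP Zᶜ = 0 := (prob_compl_eq_zero_iff hZmeas).mpr h1
      have hGae : G =ᵐ[IP] 0 := by
        have : ∀ᵐ ω ∂IP, ω ∈ Z := by
          rw [MeasureTheory.ae_iff]
          exact hcompl
        filter_upwards [this] with ω hω
        exact hω
      have huniv : IPinf Set.univ = 0 := by
        rw [← hwd, withDensity_apply _ MeasurableSet.univ, Measure.restrict_univ,
          lintegral_congr_ae hGae]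
        simp
      have := measure_univ (μ := IPinf)
      rw [huniv] at this
      exact zero_ne_one this
  -- conclude absolute continuity
  refine Measure.AbsolutelyContinuous.mk fun s hs hμs => ?_
  have h0 : ∫⁻ ω in s, G ω ∂IP = 0 := by
    rw [← hwd, withDensity_apply _ hs] at hμs
    exact hμs
  have hsZ : ∀ᵐ ω ∂IP, ω ∈ s → ω ∈ Z :=
    (setLIntegral_eq_zero_iff hs hGmeas).mp h0
  have hle : s ≤ᵐ[IP] Z := hsZ
  exact le_antisymm (hIPZ ▸ measure_mono_ae hle) zero_le
end
end
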